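/- Let Ω be a metric space and let 𝒫 be a nonempty set of Borel probability measures on Ω that is compact in the topology of weak convergence of measures. Let (F_n) be a decreasing sequence of closed subsets of Ω with intersection F = ⋂_n F_n. Then sup_{P∈𝒫} P(F_n) decreases to sup_{P∈𝒫} P(F) as n → ∞, i.e. v(F_n) ↓ v(F). -/

import Mathlib

open MeasureTheory Set Filter
open scoped NNReal Topology
open scoped ENNReal

/-- **Huber–Strassen continuity from above of the capacity along closed sets.**
Let `Ω` be a metric space and `𝔓` a nonempty weakly compact set of Borel probability
measures on `Ω`.  If `(Fₙ)` is a decreasing sequence of closed sets with intersection `F`,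
then `v(Fₙ) := sup_{P ∈ 𝔓} P(Fₙ)` decreases to `v(F) = sup_{P ∈ 𝔓} P(F)`. -/
theorem capacity_tendsto_of_closed_antitone
    {Ω : Type*} [MetricSpace Ω] [MeasurableSpace Ω] [BorelSpace Ω]
    (𝔓 : Set (ProbabilityMeasure Ω)) (h𝔓ne : 𝔓.Nonempty) (h𝔓cpt : IsCompact 𝔓)
    (F : ℕ → Set Ω) (hFclosed : ∀ n, IsClosed (F n)) (hFanti : Antitone F) :
    Antitone (fun n => ⨆ P : 𝔓, (P : ProbabilityMeasure Ω) (F n)) ∧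
    Tendsto (fun n => ⨆ P : 𝔓, (P : ProbabilityMeasure Ω) (F n)) atTop
      (𝓝 (⨆ P : 𝔓, (P : ProbabilityMeasure Ω) (⋂ n, F n))) := by
  haveI : Nonempty 𝔓 := h𝔓ne.to_subtype
  set v : ℕ → ℝ≥0 := fun n => ⨆ P : 𝔓, (P : ProbabilityMeasure Ω) (F n) with hv
  have bdd : ∀ s : Set Ω, BddAbove (Set.range fun P : 𝔓 => (P : ProbabilityMeasure Ω) s) := by
    intro s
    exact ⟨1, by rintro x ⟨P, rfl⟩; exact ProbabilityMeasure.apply_le_one _ _⟩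
  have hanti : Antitone v := by
    intro m n hmn
    exact ciSup_mono (bdd _) fun P => (P : ProbabilityMeasure Ω).apply_mono (hFanti hmn)
  refine ⟨hanti, ?_⟩
  set L : ℝ≥0 := ⨅ n, v n with hL
  -- near maximizers
  have hnear : ∀ n : ℕ, ∃ P : 𝔓, v n - ((n : ℝ≥0) + 1)⁻¹ ≤ (P : ProbabilityMeasure Ω) (F n) := by
    intro n
    by_cases h : v n ≤ ((n : ℝ≥0) + 1)⁻¹
    · exact ⟨Classical.arbitrary 𝔓, by simp [tsub_eq_zero_of_le h]⟩
    · push_neg at h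
      have hlt : v n - ((n : ℝ≥0) + 1)⁻¹ < v n :=
        tsub_lt_self (lt_of_le_of_lt zero_le h) (by positivity)
      obtain ⟨P, hP⟩ := exists_lt_of_lt_ciSup hlt
      exact ⟨P, hP.le⟩
  choose Q hQ using hnear
  -- a cluster point of the near-maximizing sequence
  have hmap : Filter.map (fun n => (Q n : ProbabilityMeasure Ω)) atTop ≤ 𝓟 𝔓 :=
    Filter.le_principal_iff.mpr (Filter.mem_map.mpr (Filter.Eventually.of_forall fun n => (Q n).2))
  obtain ⟨P, hP𝔓, hPcl⟩ := h𝔓cpt.exists_mapClusterPt hmap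
  set g : Filter (ProbabilityMeasure Ω) :=
    𝓝 P ⊓ Filter.map (fun n => (Q n : ProbabilityMeasure Ω)) atTop with hg
  haveI hgne : g.NeBot := hPcl
  have hgtend : Tendsto (id : ProbabilityMeasure Ω → ProbabilityMeasure Ω) g (𝓝 P) :=
    inf_le_left
  -- key lower bound : L ≤ P(F m) for all m, in ℝ≥0∞
  have key : ∀ m : ℕ, (L : ℝ≥0∞) ≤ (P : Measure Ω) (F m) := by
    intro m
    apply ENNReal.le_of_forall_pos_le_add
    intro ε hε _
    obtain ⟨N, hN⟩ := exists_nat_gt (ε⁻¹ : ℝ≥0)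
    have hNε : ((N : ℝ≥0) + 1)⁻¹ ≤ ε := by
      rw [inv_le_comm₀ (by positivity) hε]
      exact le_trans hN.le (le_add_of_nonneg_right zero_le_one)
    -- eventually along the sequence, Q n (F m) ≥ L - ε
    have hev : ∀ᶠ (R : ProbabilityMeasure Ω) in g, (L : ℝ≥0∞) - (ε : ℝ≥0∞) ≤ (R : Measure Ω) (F m) := by
      apply Filter.Eventually.filter_mono inf_le_right
      rw [Filter.eventually_map]
      filter_upwards [Filter.eventually_ge_atTop (max m N)] with n hn
      have hnm : m ≤ n := le_of_max_le_left hn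
      have hnN : N ≤ n := le_of_max_le_right hn
      have h1 : v n - ((n : ℝ≥0) + 1)⁻¹ ≤ (Q n : ProbabilityMeasure Ω) (F m) :=
        le_trans (hQ n) ((Q n : ProbabilityMeasure Ω).apply_mono (hFanti hnm))
      have h2 : L - ε ≤ v n - ((n : ℝ≥0) + 1)⁻¹ := by
        apply tsub_le_tsub
        · exact ciInf_le (OrderBot.bddBelow _) n
        · refine le_trans ?_ hNε
          rw [inv_le_inv₀ (by positivity) (by positivity)]
          exact_mod_cast add_le_add_left (Nat.cast_le.mpr hnN) 1
      calc (L : ℝ≥0∞) - ε = ((L - ε : ℝ≥0) : ℝ≥0∞) := ENNReal.coe_sub.symm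
        _ ≤ (((Q n : ProbabilityMeasure Ω) (F m) : ℝ≥0) : ℝ≥0∞) := by
            exact_mod_cast le_trans h2 h1
        _ = ((Q n : ProbabilityMeasure Ω) : Measure Ω) (F m) :=
            (Q n : ProbabilityMeasure Ω).ennreal_coeFn_eq_coeFn_toMeasure (F m)
    have hlimsup : (L : ℝ≥0∞) - ε ≤ g.limsup fun R : ProbabilityMeasure Ω => (R : Measure Ω) (F m) :=
      le_limsup_of_frequently_le' hev.frequently
    have hport : (g.limsup fun R : ProbabilityMeasure Ω => ((id R : ProbabilityMeasure Ω) : Measure Ω) (F m))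
        ≤ (P : Measure Ω) (F m) :=
      ProbabilityMeasure.limsup_measure_closed_le_of_tendsto hgtend (hFclosed m)
    calc (L : ℝ≥0∞) ≤ ((L : ℝ≥0∞) - ε) + ε := le_tsub_add
      _ ≤ (P : Measure Ω) (F m) + ε := add_le_add_left (le_trans hlimsup hport) _
  -- hence L ≤ P(⋂ F n)
  have hPF : (L : ℝ≥0∞) ≤ (P : Measure Ω) (⋂ n, F n) := by
    rw [hFanti.measure_iInter (fun n => (hFclosed n).measurableSet.nullMeasurableSet)
      ⟨0, measure_ne_top _ _⟩]
    exact le_iInf key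
  have hLle : L ≤ ⨆ P : 𝔓, (P : ProbabilityMeasure Ω) (⋂ n, F n) := by
    refine le_trans ?_ (le_ciSup (bdd _) (⟨P, hP𝔓⟩ : 𝔓))
    have := hPF
    rw [← P.ennreal_coeFn_eq_coeFn_toMeasure] at this
    exact_mod_cast this
  have hLge : (⨆ P : 𝔓, (P : ProbabilityMeasure Ω) (⋂ n, F n)) ≤ L := by
    refine le_ciInf fun n => ciSup_mono (bdd _) fun R => ?_
    exact (R : ProbabilityMeasure Ω).apply_mono (Set.iInter_subset F n)
  have hEq : (⨆ P : 𝔓, (P : ProbabilityMeasure Ω) (⋂ n, F n)) = L := le_antisymm hLge hLle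
  rw [hEq]
  exact tendsto_atTop_ciInf hanti (OrderBot.bddBelow _)
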